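/- Let r > 0 and let (x₁,x₂) ∈ ℂ² satisfy |x₁ + ix₂| = |x₁ − ix₂| = √r. Then there exists a unique pair (a,w) with a ∈ ℂ, |a| = 1/2, w ∈ ℂ, |w| = r, such that u_{a,+}(w) = (x₁,x₂), namely a = conj(x₁ + ix₂)/(2√r) and w = √r(x₁ − ix₂)/(2a); and similarly there exists a unique pair (a',w') with |a'| = 1/2, |w'| = r and u_{a',−}(w') = (x₁,x₂). Hence through every point of the torus T_r there pass exactly two of these holomorphic sections, one from each family. -/

import Mathlib

open Complex

/-- The family `u_{a,+}` of holomorphic sections of `π(x₁,x₂) = x₁² + x₂²`. -/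
noncomputable def modelSectionPlus (r : ℝ) (a : ℂ) (w : ℂ) : ℂ × ℂ :=
  (a * w / (Real.sqrt r : ℂ) + (Real.sqrt r : ℂ) * (starRingEnd ℂ) a,
    I * (a * w / (Real.sqrt r : ℂ) - (Real.sqrt r : ℂ) * (starRingEnd ℂ) a))

/-- The family `u_{a,−}`. -/
noncomputable def modelSectionMinus (r : ℝ) (a : ℂ) (w : ℂ) : ℂ × ℂ :=
  (a * w / (Real.sqrt r : ℂ) + (Real.sqrt r : ℂ) * (starRingEnd ℂ) a,
    -I * (a * w / (Real.sqrt r : ℂ) - (Real.sqrt r : ℂ) * (starRingEnd ℂ) a))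

lemma family_explicit (r : ℝ) (hr : 0 < r) (p q : ℂ)
    (hp : ‖p‖ = Real.sqrt r) (hq : ‖q‖ = Real.sqrt r)
    (a w : ℂ) (ha : a = (starRingEnd ℂ) p / (2 * (Real.sqrt r : ℂ)))
    (hw : w = (Real.sqrt r : ℂ) * q / (2 * a)) :
    ‖a‖ = 1 / 2 ∧ ‖w‖ = r ∧
      ((Real.sqrt r : ℂ) * (starRingEnd ℂ) a = p / 2 ∧
       a * w = (Real.sqrt r : ℂ) * q / 2) := by
  have hs0 : 0 < Real.sqrt r := Real.sqrt_pos.2 hr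
  have hs : (Real.sqrt r : ℂ) ≠ 0 := by simpa using hs0.ne'
  have hpne : p ≠ 0 := by
    intro h; rw [h] at hp; simp at hp; exact hs0.ne' hp.symm
  have hqcne : (starRingEnd ℂ) p ≠ 0 := by simpa using hpne
  have hane : a ≠ 0 := by
    rw [ha]; exact div_ne_zero hqcne (by simp [hs])
  have habs : ‖a‖ = 1 / 2 := by
    rw [ha]
    simp only [norm_div, norm_mul, Complex.norm_conj, hp, Complex.norm_two, Complex.norm_real, Real.norm_eq_abs,
      _root_.abs_of_nonneg hs0.le]
    field_simp
  refine ⟨habs, ?_, ?_, ?_⟩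
  · rw [hw]
    simp only [norm_div, norm_mul, hq, Complex.norm_two, habs, Complex.norm_real, Real.norm_eq_abs,
      _root_.abs_of_nonneg hs0.le]
    rw [Real.mul_self_sqrt hr.le]
    norm_num
  · rw [ha, map_div₀, map_mul, Complex.conj_conj]
    simp only [map_ofNat, Complex.conj_ofReal]
    field_simp
  · rw [hw]
    field_simp

lemma family_unique (r : ℝ) (hr : 0 < r) (p q : ℂ)
    (hp : ‖p‖ = Real.sqrt r) (hq : ‖q‖ = Real.sqrt r) :
    ∃! aw : ℂ × ℂ, ‖aw.1‖ = 1 / 2 ∧ ‖aw.2‖ = r ∧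
      ((Real.sqrt r : ℂ) * (starRingEnd ℂ) aw.1 = p / 2 ∧
       aw.1 * aw.2 = (Real.sqrt r : ℂ) * q / 2) := by
  have hs0 : 0 < Real.sqrt r := Real.sqrt_pos.2 hr
  have hs : (Real.sqrt r : ℂ) ≠ 0 := by simpa using hs0.ne'
  have hpne : p ≠ 0 := by
    intro h; rw [h] at hp; simp at hp; exact hs0.ne' hp.symm
  have hqcne : (starRingEnd ℂ) p ≠ 0 := by simpa using hpne
  set A : ℂ := (starRingEnd ℂ) p / (2 * (Real.sqrt r : ℂ)) with hA
  set W : ℂ := (Real.sqrt r : ℂ) * q / (2 * A) with hW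
  have hAne : A ≠ 0 := div_ne_zero hqcne (by simp [hs])
  refine ⟨(A, W), family_explicit r hr p q hp hq A W rfl rfl, ?_⟩
  rintro ⟨a, w⟩ ⟨-, -, h1, h2⟩
  have ha : a = A := by
    have := congrArg (starRingEnd ℂ) h1
    simp only [map_mul, map_div₀, Complex.conj_conj, Complex.conj_ofReal, map_ofNat] at this
    rw [hA]
    field_simp at this ⊢
    linear_combination this
  have hw : w = W := by
    rw [hW, ← ha, eq_div_iff (mul_ne_zero two_ne_zero (ha ▸ hAne))]
    linear_combination 2 * h2
  exact Prod.ext ha hw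

lemma plus_eq_iff (r : ℝ) (hr : 0 < r) (a w x₁ x₂ : ℂ) :
    modelSectionPlus r a w = (x₁, x₂) ↔
      ((Real.sqrt r : ℂ) * (starRingEnd ℂ) a = (x₁ + I * x₂) / 2 ∧
       a * w = (Real.sqrt r : ℂ) * (x₁ - I * x₂) / 2) := by
  have hs : (Real.sqrt r : ℂ) ≠ 0 := by
    simpa using (Real.sqrt_pos.2 hr).ne'
  set s : ℂ := (Real.sqrt r : ℂ) with hsdef
  simp only [modelSectionPlus, Prod.ext_iff]
  constructor
  · rintro ⟨h1, h2⟩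
    rw [← hsdef] at h1 h2
    field_simp at h1 h2
    constructor
    · apply mul_left_cancel₀ (mul_ne_zero two_ne_zero hs)
      linear_combination h1 + I * h2 + (s^2 * (starRingEnd ℂ) a - a * w) * Complex.I_sq
    · apply mul_left_cancel₀ (two_ne_zero (α := ℂ))
      linear_combination h1 - I * h2 + (a * w - s^2 * (starRingEnd ℂ) a) * Complex.I_sq
  · rintro ⟨h1, h2⟩
    constructor
    · rw [← hsdef]
      field_simp
      linear_combination h2 + s * h1
    · rw [← hsdef]
      field_simp
      linear_combination I * h2 - I * s * h1 - s * x₂ * Complex.I_sq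

lemma minus_eq_iff (r : ℝ) (hr : 0 < r) (a w x₁ x₂ : ℂ) :
    modelSectionMinus r a w = (x₁, x₂) ↔
      ((Real.sqrt r : ℂ) * (starRingEnd ℂ) a = (x₁ - I * x₂) / 2 ∧
       a * w = (Real.sqrt r : ℂ) * (x₁ + I * x₂) / 2) := by
  have hs : (Real.sqrt r : ℂ) ≠ 0 := by
    simpa using (Real.sqrt_pos.2 hr).ne'
  set s : ℂ := (Real.sqrt r : ℂ) with hsdef
  simp only [modelSectionMinus, Prod.ext_iff]
  constructor
  · rintro ⟨h1, h2⟩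
    rw [← hsdef] at h1 h2
    field_simp at h1 h2
    constructor
    · apply mul_left_cancel₀ (mul_ne_zero two_ne_zero hs)
      linear_combination h1 - I * h2 + (s^2 * (starRingEnd ℂ) a - a * w) * Complex.I_sq
    · apply mul_left_cancel₀ (two_ne_zero (α := ℂ))
      linear_combination h1 + I * h2 + (a * w - s^2 * (starRingEnd ℂ) a) * Complex.I_sq
  · rintro ⟨h1, h2⟩
    constructor
    · rw [← hsdef]
      field_simp
      linear_combination h2 + s * h1
    · rw [← hsdef]
      field_simp
      linear_combination -I * h2 + I * s * h1 - s * x₂ * Complex.I_sq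

/-- Through every point `(x₁,x₂)` of the matching torus
`T_r = {|x₁ + ix₂| = |x₁ − ix₂| = √r}` there passes a unique section of each family:
there is a unique pair `(a,w)` with `|a| = 1/2`, `|w| = r`, `u_{a,+}(w) = (x₁,x₂)`,
namely `a = conj(x₁ + ix₂)/(2√r)` and `w = √r(x₁ − ix₂)/(2a)`, and likewise a unique
pair `(a',w')` with `u_{a',−}(w') = (x₁,x₂)`. -/
theorem model_sections_through_point (r : ℝ) (hr : 0 < r) (x₁ x₂ : ℂ)
    (h₁ : ‖(x₁ + I * x₂)‖ = Real.sqrt r)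
    (h₂ : ‖(x₁ - I * x₂)‖ = Real.sqrt r) :
    (∃! aw : ℂ × ℂ, ‖aw.1‖ = 1 / 2 ∧ ‖aw.2‖ = r ∧
        modelSectionPlus r aw.1 aw.2 = (x₁, x₂)) ∧
    (∀ a w : ℂ,
        a = (starRingEnd ℂ) (x₁ + I * x₂) / (2 * (Real.sqrt r : ℂ)) →
        w = (Real.sqrt r : ℂ) * (x₁ - I * x₂) / (2 * a) →
        ‖a‖ = 1 / 2 ∧ ‖w‖ = r ∧
          modelSectionPlus r a w = (x₁, x₂)) ∧
    (∃! aw : ℂ × ℂ, ‖aw.1‖ = 1 / 2 ∧ ‖aw.2‖ = r ∧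
        modelSectionMinus r aw.1 aw.2 = (x₁, x₂)) := by
  refine ⟨?_, ?_, ?_⟩
  · obtain ⟨aw, ⟨ha1, ha2, ha3⟩, hu⟩ := family_unique r hr (x₁ + I * x₂) (x₁ - I * x₂) h₁ h₂
    refine ⟨aw, ⟨ha1, ha2, (plus_eq_iff r hr aw.1 aw.2 x₁ x₂).mpr ha3⟩, ?_⟩
    rintro y ⟨hy1, hy2, hy3⟩
    exact hu y ⟨hy1, hy2, (plus_eq_iff r hr y.1 y.2 x₁ x₂).mp hy3⟩
  · intro a w ha hw
    obtain ⟨k1, k2, k3⟩ := family_explicit r hr (x₁ + I * x₂) (x₁ - I * x₂) h₁ h₂ a w ha hw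
    exact ⟨k1, k2, (plus_eq_iff r hr a w x₁ x₂).mpr k3⟩
  · obtain ⟨aw, ⟨ha1, ha2, ha3⟩, hu⟩ := family_unique r hr (x₁ - I * x₂) (x₁ + I * x₂) h₂ h₁
    refine ⟨aw, ⟨ha1, ha2, (minus_eq_iff r hr aw.1 aw.2 x₁ x₂).mpr ha3⟩, ?_⟩
    rintro y ⟨hy1, hy2, hy3⟩
    exact hu y ⟨hy1, hy2, (minus_eq_iff r hr y.1 y.2 x₁ x₂).mp hy3⟩
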